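/- With P(q,ε) ∈ Mat_{d+1}(F) defined by P_{i,j} = q^{ij}(εq^{-i};q)_j/(εq;q)_j as above, one has P(q,ε)·P(q^{-1},ε) = ((q;q)_d/(εq;q)_d)·I. In particular, P(q,ε) is invertible. -/

import Mathlib

/-- The q-Pochhammer symbol `(a;q)_r = (1-a)(1-aq)⋯(1-aq^{r-1})`. -/
def qpoch {F : Type*} [Field F] (a q : F) (r : ℕ) : F :=
  ∏ ℓ ∈ Finset.range r, (1 - a * q ^ ℓ)

/-- The matrix `P(q,ε)` with entries `q^{ij} (εq^{-i};q)_j / (εq;q)_j`. -/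
def Pmat {F : Type*} [Field F] (d : ℕ) (q ε : F) : Matrix (Fin (d + 1)) (Fin (d + 1)) F :=
  Matrix.of fun i j : Fin (d + 1) =>
    q ^ (i.val * j.val) * qpoch (ε * q⁻¹ ^ i.val) q j.val / qpoch (ε * q) q j.val

open Finset Polynomial

namespace Stmt4Aux
variable {F : Type*} [Field F]

lemma qpoch_succ (a q : F) (r : ℕ) : qpoch a q (r + 1) = qpoch a q r * (1 - a * q ^ r) :=
  Finset.prod_range_succ _ _

lemma qpoch_succ' (a q : F) (r : ℕ) : qpoch a q (r + 1) = (1 - a) * qpoch (a * q) q r := by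
  rw [qpoch, Finset.prod_range_succ']
  simp only [pow_zero, mul_one, qpoch]
  rw [mul_comm]
  congr 1
  exact Finset.prod_congr rfl fun ℓ _ => by ring_nf

lemma qpoch_ne_zero (a q : F) (r : ℕ) (h : ∀ ℓ, ℓ < r → 1 - a * q ^ ℓ ≠ 0) :
    qpoch a q r ≠ 0 :=
  Finset.prod_ne_zero_iff.2 fun ℓ hℓ => h ℓ (Finset.mem_range.1 hℓ)

lemma qpoch_order {n : ℕ} {q : F} (hq : IsPrimitiveRoot q (n + 1)) (c : F) :
    qpoch c q (n + 1) = 1 - c ^ (n + 1) := by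
  have h := X_pow_sub_C_eq_prod hq (Nat.succ_pos n) (rfl : c ^ (n + 1) = c ^ (n + 1))
  apply_fun Polynomial.eval 1 at h
  simpa [qpoch, mul_comm, eval_prod] using h.symm

lemma tele_step (a z q : F) (j : ℕ)
    (hQ : qpoch (a * z * q) q j ≠ 0) (hQ' : 1 - a * z * q * q ^ j ≠ 0) :
    (z - 1) * (z ^ j * qpoch a q j / qpoch (a * z * q) q j) =
      z ^ (j + 1) * qpoch a q (j + 1) * (1 - a * z * q ^ (j + 1)) /
          qpoch (a * z * q) q (j + 1) -
        z ^ j * qpoch a q j * (1 - a * z * q ^ j) / qpoch (a * z * q) q j := by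
  rw [qpoch_succ a, qpoch_succ (a * z * q)]
  rw [eq_sub_iff_add_eq, mul_div_assoc', ← add_div,
    div_eq_div_iff hQ (mul_ne_zero hQ hQ')]
  ring

lemma t_step (a z q : F) (j : ℕ)
    (hQ : qpoch (a * z * q) q j ≠ 0) (hQ' : 1 - a * z * q * q ^ j ≠ 0) :
    z ^ (j + 1) * qpoch a q (j + 1) / qpoch (a * z * q) q (j + 1) =
      z ^ j * qpoch a q j / qpoch (a * z * q) q j *
        (z * (1 - a * q ^ j) / (1 - a * z * q * q ^ j)) := by
  rw [qpoch_succ a, qpoch_succ (a * z * q)]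
  field_simp
  ring

-- the term identity
lemma term_eq (d : ℕ) (q ε : F) (hq0 : q ≠ 0) (i k : ℕ)
    (hfact : ∀ (s t : ℕ) (x : F), x = ε * (q ^ s * q⁻¹ ^ t) → 1 - x ≠ 0) :
    ∀ j : ℕ,
      q ^ (i * j) * qpoch (ε * q⁻¹ ^ i) q j / qpoch (ε * q) q j *
          (q⁻¹ ^ (j * k) * qpoch (ε * q ^ j) q⁻¹ k / qpoch (ε * q⁻¹) q⁻¹ k) =
        (1 - ε) / (1 - ε * q⁻¹ ^ k) *
          ((q ^ i * q⁻¹ ^ k) ^ j * qpoch (ε * q⁻¹ ^ i) q j /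
            qpoch (ε * q⁻¹ ^ i * (q ^ i * q⁻¹ ^ k) * q) q j) := by
  have hcan : q⁻¹ ^ i * q ^ i = 1 := by
    rw [inv_pow]; exact inv_mul_cancel₀ (pow_ne_zero _ hq0)
  have hQeq : ∀ r, qpoch (ε * q) q r ≠ 0 := fun r =>
    qpoch_ne_zero _ _ _ fun ℓ _ => hfact (ℓ + 1) 0 _ (by ring)
  have hQeqi : ∀ r, qpoch (ε * q⁻¹) q⁻¹ r ≠ 0 := fun r =>
    qpoch_ne_zero _ _ _ fun ℓ _ => hfact 0 (ℓ + 1) _ (by ring)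
  have hQb : ∀ r, qpoch (ε * q⁻¹ ^ i * (q ^ i * q⁻¹ ^ k) * q) q r ≠ 0 := fun r =>
    qpoch_ne_zero _ _ _ fun ℓ _ => by
      refine hfact (ℓ + 1) k _ ?_
      calc ε * q⁻¹ ^ i * (q ^ i * q⁻¹ ^ k) * q * q ^ ℓ
          = (q⁻¹ ^ i * q ^ i) * (ε * (q ^ (ℓ + 1) * q⁻¹ ^ k)) := by ring
        _ = ε * (q ^ (ℓ + 1) * q⁻¹ ^ k) := by rw [hcan, one_mul]
  have hQb' : ∀ ℓ : ℕ, 1 - ε * q⁻¹ ^ i * (q ^ i * q⁻¹ ^ k) * q * q ^ ℓ ≠ 0 := fun ℓ => by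
    refine hfact (ℓ + 1) k _ ?_
    calc ε * q⁻¹ ^ i * (q ^ i * q⁻¹ ^ k) * q * q ^ ℓ
        = (q⁻¹ ^ i * q ^ i) * (ε * (q ^ (ℓ + 1) * q⁻¹ ^ k)) := by ring
      _ = ε * (q ^ (ℓ + 1) * q⁻¹ ^ k) := by rw [hcan, one_mul]
  have h1k : 1 - ε * q⁻¹ ^ k ≠ 0 := hfact 0 k _ (by ring)
  intro j
  induction j with
  | zero =>
    simp only [Nat.mul_zero, Nat.zero_mul, pow_zero, mul_one, one_mul, qpoch, range_zero,
      prod_empty, div_one]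
    have hb0 : qpoch ε q⁻¹ k * (1 - ε * q⁻¹ ^ k) = (1 - ε) * qpoch (ε * q⁻¹) q⁻¹ k := by
      rw [← qpoch_succ, qpoch_succ']
    show qpoch ε q⁻¹ k / qpoch (ε * q⁻¹) q⁻¹ k = (1 - ε) / (1 - ε * q⁻¹ ^ k)
    rw [div_eq_div_iff (hQeqi k) h1k]
    exact hb0
  | succ j ih =>
    rw [t_step _ _ _ j (hQb j) (hQb' j), ← mul_assoc, ← ih]
    -- now: LHS_{j+1} = LHS_j * (z * (1 - a q^j) / (1 - a z q q^j))
    have hshift : qpoch (ε * q ^ (j + 1)) q⁻¹ k *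
        (1 - ε * q⁻¹ ^ i * (q ^ i * q⁻¹ ^ k) * q * q ^ j) =
        (1 - ε * q ^ (j + 1)) * qpoch (ε * q ^ j) q⁻¹ k := by
      have e1 : ε * q⁻¹ ^ i * (q ^ i * q⁻¹ ^ k) * q * q ^ j = ε * q ^ (j + 1) * q⁻¹ ^ k := by
        calc ε * q⁻¹ ^ i * (q ^ i * q⁻¹ ^ k) * q * q ^ j
            = (q⁻¹ ^ i * q ^ i) * (ε * q ^ (j + 1) * q⁻¹ ^ k) := by ring
          _ = ε * q ^ (j + 1) * q⁻¹ ^ k := by rw [hcan, one_mul]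
      have e2 : ε * q ^ (j + 1) * q⁻¹ = ε * q ^ j := by
        rw [pow_succ, mul_assoc ε, mul_assoc, mul_inv_cancel₀ hq0, mul_one]
      rw [e1, ← qpoch_succ, qpoch_succ', e2]
    have hA : qpoch (ε * q ^ (j + 1)) q⁻¹ k =
        (1 - ε * q ^ (j + 1)) * qpoch (ε * q ^ j) q⁻¹ k /
          (1 - ε * q⁻¹ ^ i * (q ^ i * q⁻¹ ^ k) * q * q ^ j) := by
      rw [eq_div_iff (hQb' j)]; exact hshift
    rw [hA, qpoch_succ (ε * q⁻¹ ^ i), qpoch_succ (ε * q), Nat.mul_succ, pow_add,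
      Nat.succ_mul, pow_add]
    have h2 : 1 - ε * q * q ^ j ≠ 0 := hfact (j + 1) 0 _ (by ring)
    simp only [div_mul_eq_mul_div, mul_div_assoc', div_div]
    rw [div_eq_div_iff
      (mul_ne_zero (mul_ne_zero (hQeq j) h2) (mul_ne_zero (hQb' j) (hQeqi k)))
      (mul_ne_zero (mul_ne_zero (hQeq j) (hQeqi k)) (hQb' j))]
    ring

lemma derivative_finset_prod {ι : Type*} [DecidableEq ι] (s : Finset ι) (f : ι → Polynomial F) :
    Polynomial.derivative (∏ i ∈ s, f i) =
      ∑ b ∈ s, (∏ a ∈ s.erase b, f a) * Polynomial.derivative (f b) := by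
  induction s using Finset.induction_on with
  | empty => simp
  | @insert a s ha ih =>
    have hrw : ∑ b ∈ s, (∏ a' ∈ (insert a s).erase b, f a') * Polynomial.derivative (f b) =
        ∑ b ∈ s, (f a * ∏ a' ∈ s.erase b, f a') * Polynomial.derivative (f b) := by
      refine Finset.sum_congr rfl fun b hb => ?_
      rw [Finset.erase_insert_of_ne (by rintro rfl; exact ha hb),
        Finset.prod_insert (fun h => ha (Finset.erase_subset _ _ h))]
    rw [Finset.sum_insert ha, Finset.erase_insert ha, hrw,
      Finset.prod_insert ha, Polynomial.derivative_mul, ih, Finset.mul_sum]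
    congr 1
    · exact mul_comm _ _
    · exact Finset.sum_congr rfl fun b _ => by ring

lemma sum_prod_erase {n : ℕ} {q : F} (hq : IsPrimitiveRoot q (n + 1)) (ε : F) :
    ∑ m ∈ Finset.range (n + 1), ∏ m' ∈ (Finset.range (n + 1)).erase m, (1 - ε * q ^ m') =
      (n + 1 : F) := by
  have h := X_pow_sub_C_eq_prod hq (Nat.succ_pos n) (rfl : ε ^ (n + 1) = ε ^ (n + 1))
  apply_fun Polynomial.derivative at h
  rw [Polynomial.derivative_sub, Polynomial.derivative_X_pow, Polynomial.derivative_C, sub_zero,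
    derivative_finset_prod] at h
  apply_fun Polynomial.eval 1 at h
  simp only [Polynomial.eval_mul, Polynomial.eval_finset_sum, Polynomial.eval_prod,
    Polynomial.eval_sub, Polynomial.eval_X, Polynomial.eval_C, Polynomial.eval_pow,
    Polynomial.eval_natCast, Polynomial.derivative_sub, Polynomial.derivative_X,
    Polynomial.derivative_C, sub_zero, Polynomial.eval_one, mul_one, one_pow] at h
  have hrw : ∑ m ∈ Finset.range (n + 1), ∏ m' ∈ (Finset.range (n + 1)).erase m, (1 - ε * q ^ m') =
      ∑ m ∈ Finset.range (n + 1), ∏ m' ∈ (Finset.range (n + 1)).erase m, (1 - q ^ m' * ε) :=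
    Finset.sum_congr rfl fun m _ => Finset.prod_congr rfl fun m' _ => by ring
  rw [hrw, ← h]
  push_cast; ring


end Stmt4Aux

namespace Stmt4Aux2
open Stmt4Aux
variable {F : Type*} [Field F]

lemma qpoch_q_order {n : ℕ} {q : F} (hq : IsPrimitiveRoot q (n + 1)) :
    qpoch q q n = (n + 1 : F) := by
  have h := hq.prod_one_sub_pow_eq_order
  rw [qpoch, ← h]
  exact Finset.prod_congr rfl fun ℓ _ => by rw [pow_succ, mul_comm]

lemma key_sum (d : ℕ) (q ε : F) (hq : IsPrimitiveRoot q (d + 1))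
    (hε : ∀ i : ℕ, i ≤ d → ε ≠ q ^ i) (i k : ℕ) (hi : i < d + 1) (hk : k < d + 1) :
    ∑ j ∈ Finset.range (d + 1),
        (q ^ (i * j) * qpoch (ε * q⁻¹ ^ i) q j / qpoch (ε * q) q j *
          (q⁻¹ ^ (j * k) * qpoch (ε * q ^ j) q⁻¹ k / qpoch (ε * q⁻¹) q⁻¹ k)) =
      if i = k then qpoch q q d / qpoch (ε * q) q d else 0 := by
  have hq0 : q ≠ 0 := hq.ne_zero (Nat.succ_ne_zero d)
  have hqn : q ^ (d + 1) = 1 := hq.pow_eq_one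
  have hqinv : q⁻¹ = q ^ d := by
    refine inv_eq_of_mul_eq_one_right ?_
    rw [← pow_succ']; exact hqn
  have hpow : ∀ m : ℕ, q ^ m = q ^ (m % (d + 1)) := fun m => by
    conv_lhs => rw [← Nat.div_add_mod m (d + 1)]
    rw [pow_add, pow_mul, hqn, one_pow, one_mul]
  have hkey : ∀ m : ℕ, 1 - ε * q ^ m ≠ 0 := by
    intro m h
    have h1 : ε * q ^ m = 1 := (sub_eq_zero.mp h).symm
    have h2 : ε = q ^ (d * m % (d + 1)) := by
      have he : ε = (q ^ m)⁻¹ := eq_inv_of_mul_eq_one_left h1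
      rw [he, ← inv_pow, hqinv, ← pow_mul, ← hpow]
    exact hε _ (Nat.lt_succ_iff.mp (Nat.mod_lt _ (Nat.succ_pos d))) h2
  have hfact : ∀ (s t : ℕ) (x : F), x = ε * (q ^ s * q⁻¹ ^ t) → 1 - x ≠ 0 := by
    intro s t x hx
    rw [hx, hqinv, ← pow_mul, ← pow_add]
    exact hkey _
  have hcan : ∀ m : ℕ, q⁻¹ ^ m * q ^ m = 1 := fun m => by
    rw [inv_pow]; exact inv_mul_cancel₀ (pow_ne_zero _ hq0)
  have hεn : (1 : F) - ε ^ (d + 1) ≠ 0 := by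
    rw [← qpoch_order hq ε]
    exact qpoch_ne_zero _ _ _ fun ℓ _ => hfact ℓ 0 _ (by ring)
  have hQeq : ∀ r, qpoch (ε * q) q r ≠ 0 := fun r =>
    qpoch_ne_zero _ _ _ fun ℓ _ => hfact (ℓ + 1) 0 _ (by ring)
  have hQb : ∀ r, qpoch (ε * q⁻¹ ^ i * (q ^ i * q⁻¹ ^ k) * q) q r ≠ 0 := fun r =>
    qpoch_ne_zero _ _ _ fun ℓ _ => by
      refine hfact (ℓ + 1) k _ ?_
      calc ε * q⁻¹ ^ i * (q ^ i * q⁻¹ ^ k) * q * q ^ ℓ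
          = (q⁻¹ ^ i * q ^ i) * (ε * (q ^ (ℓ + 1) * q⁻¹ ^ k)) := by ring
        _ = ε * (q ^ (ℓ + 1) * q⁻¹ ^ k) := by rw [hcan, one_mul]
  have hQb' : ∀ ℓ : ℕ, 1 - ε * q⁻¹ ^ i * (q ^ i * q⁻¹ ^ k) * q * q ^ ℓ ≠ 0 := fun ℓ => by
    refine hfact (ℓ + 1) k _ ?_
    calc ε * q⁻¹ ^ i * (q ^ i * q⁻¹ ^ k) * q * q ^ ℓ
        = (q⁻¹ ^ i * q ^ i) * (ε * (q ^ (ℓ + 1) * q⁻¹ ^ k)) := by ring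
      _ = ε * (q ^ (ℓ + 1) * q⁻¹ ^ k) := by rw [hcan, one_mul]
  have h1k : 1 - ε * q⁻¹ ^ k ≠ 0 := hfact 0 k _ (by ring)
  -- rewrite each summand using term_eq
  rw [Finset.sum_congr rfl fun j _ => term_eq d q ε hq0 i k hfact j]
  rw [← Finset.mul_sum]
  by_cases hik : i = k
  · -- diagonal case
    subst hik
    rw [if_pos rfl]
    have hz1 : q ^ i * q⁻¹ ^ i = 1 := by rw [mul_comm]; exact hcan i
    have h1a : 1 - ε * q⁻¹ ^ i ≠ 0 := h1k
    have hQaq : ∀ r, qpoch (ε * q⁻¹ ^ i * q) q r ≠ 0 := fun r =>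
      qpoch_ne_zero _ _ _ fun ℓ _ => hfact (ℓ + 1) i _ (by ring)
    have hterm2 : ∀ j ∈ Finset.range (d + 1),
        (1 - ε) / (1 - ε * q⁻¹ ^ i) *
            ((q ^ i * q⁻¹ ^ i) ^ j * qpoch (ε * q⁻¹ ^ i) q j /
              qpoch (ε * q⁻¹ ^ i * (q ^ i * q⁻¹ ^ i) * q) q j) =
          (1 - ε) * (∏ m' ∈ (Finset.range (d + 1)).erase ((d * i + j) % (d + 1)),
              (1 - ε * q ^ m')) / (1 - ε ^ (d + 1)) := by
      intro j hj
      have e0 : ε * q⁻¹ ^ i * (q ^ i * q⁻¹ ^ i) * q = ε * q⁻¹ ^ i * q := by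
        rw [hz1, mul_one]
      rw [e0, hz1, one_pow, one_mul]
      have hfrac : qpoch (ε * q⁻¹ ^ i) q j * (1 - ε * q⁻¹ ^ i * q ^ j) =
          (1 - ε * q⁻¹ ^ i) * qpoch (ε * q⁻¹ ^ i * q) q j := by
        rw [← qpoch_succ, qpoch_succ']
      have he : ε * q⁻¹ ^ i * q ^ j = ε * q ^ ((d * i + j) % (d + 1)) := by
        rw [hqinv, ← pow_mul, mul_assoc, ← pow_add, ← hpow]
      have hm : (d * i + j) % (d + 1) ∈ Finset.range (d + 1) :=
        Finset.mem_range.mpr (Nat.mod_lt _ (Nat.succ_pos d))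
      have hp : (1 - ε * q ^ ((d * i + j) % (d + 1))) *
          ∏ m' ∈ (Finset.range (d + 1)).erase ((d * i + j) % (d + 1)), (1 - ε * q ^ m') =
          1 - ε ^ (d + 1) := by
        rw [← qpoch_order hq ε]
        exact Finset.mul_prod_erase (Finset.range (d + 1)) (fun m' => 1 - ε * q ^ m') hm
      rw [div_mul_div_comm, div_eq_div_iff (mul_ne_zero h1a (hQaq j)) hεn, ← hp, ← he]
      linear_combination ((1 - ε) *
        ∏ m' ∈ (Finset.range (d + 1)).erase ((d * i + j) % (d + 1)), (1 - ε * q ^ m')) * hfrac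
    rw [Finset.mul_sum, Finset.sum_congr rfl hterm2]
    have hre : ∑ j ∈ Finset.range (d + 1),
        ((1 - ε) * (∏ m' ∈ (Finset.range (d + 1)).erase ((d * i + j) % (d + 1)),
          (1 - ε * q ^ m')) / (1 - ε ^ (d + 1))) =
        ∑ m ∈ Finset.range (d + 1),
        ((1 - ε) * (∏ m' ∈ (Finset.range (d + 1)).erase m, (1 - ε * q ^ m')) /
          (1 - ε ^ (d + 1))) := by
      refine Finset.sum_nbij' (fun j => (d * i + j) % (d + 1))
        (fun m => (i + m) % (d + 1)) ?_ ?_ ?_ ?_ ?_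
      · intro a _; exact Finset.mem_range.mpr (Nat.mod_lt _ (Nat.succ_pos d))
      · intro a _; exact Finset.mem_range.mpr (Nat.mod_lt _ (Nat.succ_pos d))
      · intro a ha
        beta_reduce
        have h1 : (i + (d * i + a) % (d + 1)) % (d + 1) = (i + (d * i + a)) % (d + 1) :=
          Nat.ModEq.add_left i (Nat.mod_modEq _ _)
        have h2 : i + (d * i + a) = (d + 1) * i + a := by ring
        rw [h1, h2, Nat.mul_add_mod, Nat.mod_eq_of_lt (Finset.mem_range.mp ha)]
      · intro a ha
        beta_reduce
        have h1 : (d * i + (i + a) % (d + 1)) % (d + 1) = (d * i + (i + a)) % (d + 1) :=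
          Nat.ModEq.add_left (d * i) (Nat.mod_modEq _ _)
        have h2 : d * i + (i + a) = (d + 1) * i + a := by ring
        rw [h1, h2, Nat.mul_add_mod, Nat.mod_eq_of_lt (Finset.mem_range.mp ha)]
      · intro a _; rfl
    rw [hre, ← Finset.sum_div, ← Finset.mul_sum, sum_prod_erase hq ε, qpoch_q_order hq,
      div_eq_div_iff hεn (hQeq d)]
    have hfac2 : (1 - ε) * qpoch (ε * q) q d = 1 - ε ^ (d + 1) := by
      rw [← qpoch_succ']
      exact qpoch_order hq ε
    linear_combination ((d : F) + 1) * hfac2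
  · -- off-diagonal case
    rw [if_neg hik]
    have hu : ∀ m : ℕ, ((q : F) ^ m) ^ (d + 1) = 1 := fun m => by
      rw [← pow_mul, mul_comm, pow_mul, hqn, one_pow]
    have hui : ∀ m : ℕ, ((q⁻¹ : F) ^ m) ^ (d + 1) = 1 := fun m => by
      rw [inv_pow, inv_pow, hu, inv_one]
    have hzne : q ^ i * q⁻¹ ^ k ≠ 1 := by
      intro h
      have h2 : q ^ i = q ^ k := by
        have h3 := congrArg (· * q ^ k) h
        simp only [mul_assoc, hcan k, mul_one, one_mul] at h3
        exact h3
      exact hik (hq.pow_inj hi hk h2)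
    have hq00 : qpoch (ε * q⁻¹ ^ i * (q ^ i * q⁻¹ ^ k) * q) q 0 = 1 := by
      simp [qpoch]
    have hG : (q ^ i * q⁻¹ ^ k) ^ (d + 1) * qpoch (ε * q⁻¹ ^ i) q (d + 1) *
          (1 - ε * q⁻¹ ^ i * (q ^ i * q⁻¹ ^ k) * q ^ (d + 1)) /
          qpoch (ε * q⁻¹ ^ i * (q ^ i * q⁻¹ ^ k) * q) q (d + 1) =
        (q ^ i * q⁻¹ ^ k) ^ 0 * qpoch (ε * q⁻¹ ^ i) q 0 *
          (1 - ε * q⁻¹ ^ i * (q ^ i * q⁻¹ ^ k) * q ^ 0) /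
          qpoch (ε * q⁻¹ ^ i * (q ^ i * q⁻¹ ^ k) * q) q 0 := by
      have e1 : ((q : F) ^ i * q⁻¹ ^ k) ^ (d + 1) = 1 := by
        rw [mul_pow, hu, hui, one_mul]
      have e2 : qpoch (ε * q⁻¹ ^ i) q (d + 1) = 1 - ε ^ (d + 1) := by
        rw [qpoch_order hq, mul_pow, hui, mul_one]
      have e3 : qpoch (ε * q⁻¹ ^ i * (q ^ i * q⁻¹ ^ k) * q) q (d + 1) = 1 - ε ^ (d + 1) := by
        rw [qpoch_order hq, mul_pow, mul_pow, mul_pow, hui, e1, hqn, mul_one, mul_one, mul_one]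
      rw [e1, e2, e3, hqn, hq00]
      simp only [qpoch, Finset.range_zero, Finset.prod_empty, pow_zero, one_mul, mul_one, div_one]
      rw [mul_comm, mul_div_assoc, div_self hεn, mul_one]
    have hts := Finset.sum_range_sub (fun m =>
      (q ^ i * q⁻¹ ^ k) ^ m * qpoch (ε * q⁻¹ ^ i) q m *
        (1 - ε * q⁻¹ ^ i * (q ^ i * q⁻¹ ^ k) * q ^ m) /
        qpoch (ε * q⁻¹ ^ i * (q ^ i * q⁻¹ ^ k) * q) q m) (d + 1)
    beta_reduce at hts
    have h0 : ∑ j ∈ Finset.range (d + 1),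
        ((q ^ i * q⁻¹ ^ k - 1) *
          ((q ^ i * q⁻¹ ^ k) ^ j * qpoch (ε * q⁻¹ ^ i) q j /
            qpoch (ε * q⁻¹ ^ i * (q ^ i * q⁻¹ ^ k) * q) q j)) = 0 := by
      rw [Finset.sum_congr rfl fun j _ => tele_step _ _ _ j (hQb j) (hQb' j), hts,
        sub_eq_zero]
      exact hG
    rw [← Finset.mul_sum] at h0
    rcases mul_eq_zero.mp h0 with h | h
    · exact absurd (sub_eq_zero.mp h) hzne
    · rw [h, mul_zero]

end Stmt4Aux2


theorem stmt4 {F : Type*} [Field F] (d : ℕ) (hd : 1 ≤ d) (q ε : F)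
    (hq : IsPrimitiveRoot q (d + 1))
    (hε : ∀ i : ℕ, i ≤ d → ε ≠ q ^ i) :
    Pmat d q ε * Pmat d q⁻¹ ε =
        (qpoch q q d / qpoch (ε * q) q d) • (1 : Matrix (Fin (d + 1)) (Fin (d + 1)) F) ∧
      IsUnit (Pmat d q ε) := by
  have hq0 : q ≠ 0 := hq.ne_zero (Nat.succ_ne_zero d)
  have hqn : q ^ (d + 1) = 1 := hq.pow_eq_one
  have hqinv : q⁻¹ = q ^ d := by
    refine inv_eq_of_mul_eq_one_right ?_
    rw [← pow_succ']; exact hqn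
  have hpow : ∀ m : ℕ, q ^ m = q ^ (m % (d + 1)) := fun m => by
    conv_lhs => rw [← Nat.div_add_mod m (d + 1)]
    rw [pow_add, pow_mul, hqn, one_pow, one_mul]
  have hkey : ∀ m : ℕ, 1 - ε * q ^ m ≠ 0 := by
    intro m h
    have h1 : ε * q ^ m = 1 := (sub_eq_zero.mp h).symm
    have h2 : ε = q ^ (d * m % (d + 1)) := by
      have he : ε = (q ^ m)⁻¹ := eq_inv_of_mul_eq_one_left h1
      rw [he, ← inv_pow, hqinv, ← pow_mul, ← hpow]
    exact hε _ (Nat.lt_succ_iff.mp (Nat.mod_lt _ (Nat.succ_pos d))) h2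
  have hden : qpoch (ε * q) q d ≠ 0 :=
    Stmt4Aux.qpoch_ne_zero _ _ _ fun ℓ _ => by
      have h := hkey (ℓ + 1)
      intro hcon
      apply h
      rw [← hcon]; ring
  have hQd : qpoch q q d ≠ 0 :=
    Stmt4Aux.qpoch_ne_zero _ _ _ fun ℓ hℓ => by
      intro h
      have h1 : q ^ (ℓ + 1) = 1 := by rw [pow_succ']; exact (sub_eq_zero.mp h).symm
      exact hq.pow_ne_one_of_pos_of_lt (Nat.succ_ne_zero ℓ) (Nat.succ_lt_succ hℓ) h1
  have main : Pmat d q ε * Pmat d q⁻¹ ε =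
      (qpoch q q d / qpoch (ε * q) q d) • (1 : Matrix (Fin (d + 1)) (Fin (d + 1)) F) := by
    ext i k
    rw [Matrix.mul_apply]
    simp only [Pmat, Matrix.of_apply, inv_inv, Matrix.smul_apply, Matrix.one_apply, smul_eq_mul]
    rw [Fin.sum_univ_eq_sum_range (fun j => q ^ (i.val * j) * qpoch (ε * q⁻¹ ^ i.val) q j /
      qpoch (ε * q) q j * (q⁻¹ ^ (j * k.val) * qpoch (ε * q ^ j) q⁻¹ k.val /
        qpoch (ε * q⁻¹) q⁻¹ k.val)) (d + 1)]
    rw [Stmt4Aux2.key_sum d q ε hq hε i.val k.val i.isLt k.isLt]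
    by_cases h : i = k
    · subst h; simp
    · rw [if_neg (fun hv => h (Fin.ext hv)), if_neg h, mul_zero]
  refine ⟨main, ?_⟩
  have hc : qpoch q q d / qpoch (ε * q) q d ≠ 0 := div_ne_zero hQd hden
  have hinv : Pmat d q ε * ((qpoch q q d / qpoch (ε * q) q d)⁻¹ • Pmat d q⁻¹ ε) = 1 := by
    rw [Matrix.mul_smul, main, smul_smul, inv_mul_cancel₀ hc, one_smul]
  have := invertibleOfRightInverse _ _ hinv
  exact isUnit_of_invertible _
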